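/- Let λ, a, b be strictly positive reals. Then ∫₀^∞ λ e^{−λx} · ln(a·x + b) dx = ln(b) + e^{λb/a} · E₁(λb/a), where E₁(z) = ∫_z^∞ t^{−1} e^{−t} dt. -/

import Mathlib

open MeasureTheory Set Real Filter
open scoped Topology

set_option maxHeartbeats 1000000

-- bound on |log (a x + b)| for x ≥ 0
lemma abs_log_bound {a b : ℝ} (ha : 0 < a) (hb : 0 < b) {x : ℝ} (hx : 0 ≤ x) :
    |Real.log (a * x + b)| ≤ |Real.log b| + (a / b) * x := by
  have hpos : 0 < a * x + b := by positivity
  have hub : Real.log (a * x + b) ≤ Real.log b + (a / b) * x := by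
    have h1 : Real.log (a * x + b) - Real.log b = Real.log ((a * x + b) / b) := by
      rw [Real.log_div hpos.ne' hb.ne']
    have h2 : Real.log ((a * x + b) / b) ≤ (a * x + b) / b - 1 :=
      Real.log_le_sub_one_of_pos (by positivity)
    have h3 : (a * x + b) / b - 1 = (a / b) * x := by field_simp; ring
    linarith [h1, h2, h3]
  have hlb : Real.log b ≤ Real.log (a * x + b) := by
    apply Real.log_le_log hb; nlinarith
  rw [abs_le]
  constructor
  · have := neg_abs_le (Real.log b)
    nlinarith [mul_nonneg (div_nonneg ha.le hb.le) hx]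
  · have := le_abs_self (Real.log b)
    linarith

-- x ≤ (2/lam) * exp (lam/2 * x) for x ≥ 0
lemma linear_le_exp {lam : ℝ} (hlam : 0 < lam) {x : ℝ} (hx : 0 ≤ x) :
    x ≤ (2 / lam) * Real.exp (lam / 2 * x) := by
  have h := Real.add_one_le_exp (lam / 2 * x)
  have h2 : lam / 2 * x ≤ Real.exp (lam / 2 * x) := by linarith
  have h3 : 0 < 2 / lam := by positivity
  calc x = (2 / lam) * (lam / 2 * x) := by field_simp
    _ ≤ (2 / lam) * Real.exp (lam / 2 * x) := by nlinarith

-- change of variables t = lam * x + c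
lemma cov_lemma (lam c : ℝ) (hlam : 0 < lam) :
    ∫ t in Ioi c, t⁻¹ * Real.exp (-t)
      = lam * ∫ x in Ioi (0:ℝ), (lam * x + c)⁻¹ * Real.exp (-(lam * x + c)) := by
  have cov1 : ∫ t in Ioi c, t⁻¹ * Real.exp (-t)
      = ∫ x in Ioi (0:ℝ), (x + c)⁻¹ * Real.exp (-(x + c)) := by
    have hmp : MeasurePreserving (fun x : ℝ => x + c) volume volume :=
      measurePreserving_add_right volume c
    have hemb : MeasurableEmbedding (fun x : ℝ => x + c) :=
      (MeasurableEquiv.addRight c).measurableEmbedding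
    have := hmp.setIntegral_preimage_emb hemb (fun t => t⁻¹ * Real.exp (-t)) (Ioi c)
    rw [preimage_add_const_Ioi, sub_self] at this
    exact this.symm
  have cov2 := integral_comp_mul_left_Ioi
    (fun y => (y + c)⁻¹ * Real.exp (-(y + c))) 0 hlam
  rw [mul_zero] at cov2
  simp only [smul_eq_mul] at cov2
  rw [cov1, cov2, ← mul_assoc, mul_inv_cancel₀ hlam.ne', one_mul]

-- key identity : exp c * E₁(c) = ∫ exp(-(lam x)) * a/(a x + b)
lemma key_lemma (lam a b : ℝ) (hlam : 0 < lam) (ha : 0 < a) (hb : 0 < b) :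
    Real.exp (lam * b / a) * ∫ t in Ioi (lam * b / a), t⁻¹ * Real.exp (-t)
      = ∫ x in Ioi (0:ℝ), Real.exp (-(lam * x)) * (a / (a * x + b)) := by
  set c : ℝ := lam * b / a with hc
  rw [cov_lemma lam c hlam, ← mul_assoc, ← integral_const_mul]
  apply setIntegral_congr_fun measurableSet_Ioi
  intro x hx
  have hx0 : (0:ℝ) < x := hx
  have hpos : 0 < a * x + b := by positivity
  have hlc : 0 < lam * x + c := by positivity
  have hexp : Real.exp c * Real.exp (-(lam * x + c)) = Real.exp (-(lam * x)) := by
    rw [← Real.exp_add]; ring_nf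
  have hfrac : (lam * x + c)⁻¹ = a / (lam * (a * x + b)) := by
    have heq : lam * x + c = lam * (a * x + b) / a := by
      rw [hc]; field_simp
    rw [heq, inv_div]
  show Real.exp c * lam * ((lam * x + c)⁻¹ * Real.exp (-(lam * x + c)))
    = Real.exp (-(lam * x)) * (a / (a * x + b))
  rw [hfrac, ← hexp]
  field_simp

/-- `E[ln(aX+b)] = ln b + e^{λb/a} E₁(λb/a)` for an exponential random variable `X`
with rate `λ`. -/
theorem exp_mean_log (lam a b : ℝ) (hlam : 0 < lam) (ha : 0 < a) (hb : 0 < b) :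
    ∫ x in Set.Ioi (0 : ℝ), lam * Real.exp (-(lam * x)) * Real.log (a * x + b)
      = Real.log b
        + Real.exp (lam * b / a) * ∫ t in Set.Ioi (lam * b / a), t⁻¹ * Real.exp (-t) := by
  have base : ∀ r : ℝ, 0 < r → IntegrableOn (fun x => Real.exp (-(r * x))) (Ioi (0:ℝ)) := by
    intro r hr
    simpa [neg_mul] using exp_neg_integrableOn_Ioi 0 hr
  -- integrability of h
  have h_int : IntegrableOn (fun x => Real.exp (-(lam * x)) * (a / (a * x + b))) (Ioi (0:ℝ)) := by
    have hmeas : AEStronglyMeasurable (fun x => Real.exp (-(lam * x)) * (a / (a * x + b)))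
        (volume.restrict (Ioi (0:ℝ))) := by
      apply ContinuousOn.aestronglyMeasurable _ measurableSet_Ioi
      apply ContinuousOn.mul (Continuous.continuousOn (by continuity))
      apply ContinuousOn.div continuousOn_const
        (Continuous.continuousOn (by continuity))
      intro x hx
      have : (0:ℝ) < x := hx
      positivity
    refine Integrable.mono' ((base lam hlam).mul_const (a / b)) hmeas ?_
    filter_upwards [ae_restrict_mem measurableSet_Ioi] with x hx
    have hx0 : (0:ℝ) < x := hx
    have hpos : 0 < a * x + b := by positivity
    have h1 : a / (a * x + b) ≤ a / b := by
      apply div_le_div_of_nonneg_left ha.le hb; nlinarith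
    simp only [Real.norm_eq_abs]
    rw [abs_of_nonneg (by positivity)]
    have he : 0 ≤ Real.exp (-(lam * x)) := (Real.exp_pos _).le
    nlinarith [mul_le_mul_of_nonneg_left h1 he]
  -- integrability of f
  have f_int : IntegrableOn (fun x => lam * Real.exp (-(lam * x)) * Real.log (a * x + b))
      (Ioi (0:ℝ)) := by
    have hmeas : AEStronglyMeasurable (fun x => lam * Real.exp (-(lam * x)) * Real.log (a * x + b))
        (volume.restrict (Ioi (0:ℝ))) := by
      apply ContinuousOn.aestronglyMeasurable _ measurableSet_Ioi
      apply ContinuousOn.mul (Continuous.continuousOn (by continuity))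
      apply ContinuousOn.log (Continuous.continuousOn (by continuity))
      intro x hx
      have : (0:ℝ) < x := hx
      positivity
    refine Integrable.mono'
      (((base (lam/2) (by positivity)).const_mul (lam * |Real.log b| + 2 * a / b))) hmeas ?_
    filter_upwards [ae_restrict_mem measurableSet_Ioi] with x hx
    have hx0 : (0:ℝ) < x := hx
    have hlog := abs_log_bound ha hb hx0.le
    have hlin := linear_le_exp hlam hx0.le
    have he : 0 < Real.exp (-(lam * x)) := Real.exp_pos _
    have hsplit : Real.exp (-(lam * x)) = Real.exp (-(lam/2 * x)) * Real.exp (-(lam/2 * x)) := by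
      rw [← Real.exp_add]; ring_nf
    have hee : Real.exp (-(lam/2 * x)) ≤ 1 := Real.exp_le_one_iff.mpr (by nlinarith)
    have he2 : 0 < Real.exp (-(lam/2 * x)) := Real.exp_pos _
    simp only [Real.norm_eq_abs]
    rw [abs_mul, abs_mul, abs_of_nonneg hlam.le, abs_of_nonneg he.le]
    have key1 : lam * Real.exp (-(lam * x)) * |Real.log b|
        ≤ lam * |Real.log b| * Real.exp (-(lam/2 * x)) := by
      rw [hsplit]
      have h5 : Real.exp (-(lam/2*x)) * Real.exp (-(lam/2*x)) ≤ Real.exp (-(lam/2*x)) :=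
        mul_le_of_le_one_left he2.le hee
      have h6 := mul_le_mul_of_nonneg_left h5 (mul_nonneg hlam.le (abs_nonneg (Real.log b)))
      nlinarith [h6]
    have key2 : lam * Real.exp (-(lam * x)) * ((a/b) * x)
        ≤ (2 * a / b) * Real.exp (-(lam/2 * x)) := by
      have hx2 : x * Real.exp (-(lam * x)) ≤ (2/lam) * Real.exp (-(lam/2 * x)) := by
        rw [hsplit]
        have hinv : Real.exp (lam/2 * x) * Real.exp (-(lam/2*x)) = 1 := by
          rw [← Real.exp_add]; ring_nf; exact Real.exp_zero
        calc x * (Real.exp (-(lam/2*x)) * Real.exp (-(lam/2*x)))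
            ≤ ((2/lam) * Real.exp (lam/2 * x)) * (Real.exp (-(lam/2*x)) * Real.exp (-(lam/2*x))) := by
              apply mul_le_mul_of_nonneg_right hlin (by positivity)
          _ = (2/lam) * ((Real.exp (lam/2 * x) * Real.exp (-(lam/2*x))) * Real.exp (-(lam/2*x))) := by ring
          _ = (2/lam) * Real.exp (-(lam/2 * x)) := by rw [hinv]; ring
      calc lam * Real.exp (-(lam * x)) * ((a/b) * x)
          = (lam * (a/b)) * (x * Real.exp (-(lam*x))) := by ring
        _ ≤ (lam * (a/b)) * ((2/lam) * Real.exp (-(lam/2 * x))) := by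
            apply mul_le_mul_of_nonneg_left hx2 (by positivity)
        _ = (2 * a / b) * Real.exp (-(lam/2 * x)) := by field_simp
    calc lam * Real.exp (-(lam * x)) * |Real.log (a * x + b)|
        ≤ lam * Real.exp (-(lam * x)) * (|Real.log b| + (a/b) * x) := by
          apply mul_le_mul_of_nonneg_left hlog (by positivity)
      _ = lam * Real.exp (-(lam*x)) * |Real.log b| + lam * Real.exp (-(lam*x)) * ((a/b)*x) := by ring
      _ ≤ (lam * |Real.log b| + 2 * a / b) * Real.exp (-(lam/2 * x)) := by nlinarith [key1, key2]
  -- antiderivative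
  have h_deriv : ∀ x ∈ Ici (0:ℝ),
      HasDerivAt (fun x => -(Real.exp (-(lam * x)) * Real.log (a * x + b)))
        (lam * Real.exp (-(lam * x)) * Real.log (a * x + b)
          - Real.exp (-(lam * x)) * (a / (a * x + b))) x := by
    intro x hx
    have hx0 : (0:ℝ) ≤ x := hx
    have hpos : 0 < a * x + b := by positivity
    have d1 : HasDerivAt (fun y => Real.exp (-(lam * y))) (Real.exp (-(lam * x)) * (-lam)) x := by
      have : HasDerivAt (fun y => -(lam * y)) (-lam) x := by
        simpa using ((hasDerivAt_id x).const_mul lam).fun_neg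
      exact this.exp
    have d2 : HasDerivAt (fun y => Real.log (a * y + b)) (a / (a * x + b)) x := by
      have hu : HasDerivAt (fun y => a * y + b) a x := by
        simpa using ((hasDerivAt_id x).const_mul a).add_const b
      simpa using hu.log hpos.ne'
    have := (d1.mul d2).fun_neg
    exact this.congr_deriv (by ring)
  -- tendsto F atTop 0
  have h_tendsto : Tendsto (fun x => -(Real.exp (-(lam * x)) * Real.log (a * x + b)))
      atTop (𝓝 0) := by
    apply squeeze_zero_norm' (a := fun x => (|Real.log b| + 2*a/(b*lam)) * Real.exp (-(lam/2 * x)))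
    · filter_upwards [eventually_ge_atTop (0:ℝ)] with x hx0
      have hlog := abs_log_bound ha hb hx0
      have hlin := linear_le_exp hlam hx0
      have he : 0 < Real.exp (-(lam * x)) := Real.exp_pos _
      have hsplit : Real.exp (-(lam * x)) = Real.exp (-(lam/2 * x)) * Real.exp (-(lam/2 * x)) := by
        rw [← Real.exp_add]; ring_nf
      have hee : Real.exp (-(lam/2 * x)) ≤ 1 := Real.exp_le_one_iff.mpr (by nlinarith)
      have he2 : 0 < Real.exp (-(lam/2 * x)) := Real.exp_pos _
      have hFx : ‖-(Real.exp (-(lam * x)) * Real.log (a * x + b))‖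
          = Real.exp (-(lam * x)) * |Real.log (a*x+b)| := by
        rw [norm_neg, Real.norm_eq_abs, abs_mul, abs_of_nonneg he.le]
      rw [hFx]
      have step1 : Real.exp (-(lam * x)) * |Real.log (a*x+b)|
          ≤ Real.exp (-(lam * x)) * (|Real.log b| + (a/b)*x) := by
        apply mul_le_mul_of_nonneg_left hlog he.le
      have step2 : Real.exp (-(lam * x)) * (|Real.log b| + (a/b)*x)
          ≤ (|Real.log b| + 2*a/(b*lam)) * Real.exp (-(lam/2 * x)) := by
        rw [hsplit]
        have hxe : x * Real.exp (-(lam/2*x)) ≤ 2/lam := by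
          have hinv : Real.exp (lam/2 * x) * Real.exp (-(lam/2*x)) = 1 := by
            rw [← Real.exp_add]; ring_nf; exact Real.exp_zero
          calc x * Real.exp (-(lam/2*x))
              ≤ ((2/lam) * Real.exp (lam/2 * x)) * Real.exp (-(lam/2*x)) :=
                mul_le_mul_of_nonneg_right hlin he2.le
            _ = (2/lam) * (Real.exp (lam/2 * x) * Real.exp (-(lam/2*x))) := by ring
            _ = 2/lam := by rw [hinv]; ring
        have hA : Real.exp (-(lam/2*x)) * Real.exp (-(lam/2*x)) * |Real.log b|
            ≤ |Real.log b| * Real.exp (-(lam/2*x)) := by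
          have h5 : Real.exp (-(lam/2*x)) * Real.exp (-(lam/2*x)) ≤ Real.exp (-(lam/2*x)) :=
            mul_le_of_le_one_left he2.le hee
          have h6 := mul_le_mul_of_nonneg_right h5 (abs_nonneg (Real.log b))
          nlinarith [h6]
        have hB : Real.exp (-(lam/2*x)) * Real.exp (-(lam/2*x)) * ((a/b)*x)
            ≤ (2*a/(b*lam)) * Real.exp (-(lam/2*x)) := by
          have h7 : (a/b) * (x * Real.exp (-(lam/2*x))) ≤ (a/b) * (2/lam) :=
            mul_le_mul_of_nonneg_left hxe (by positivity)
          have heq : (a/b) * (2/lam) = 2*a/(b*lam) := by field_simp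
          nlinarith [he2.le, mul_le_mul_of_nonneg_right h7 he2.le]
        nlinarith
      linarith
    · have hlim : Tendsto (fun x : ℝ => -(lam/2 * x)) atTop atBot :=
        tendsto_neg_atTop_atBot.comp
          ((tendsto_const_mul_atTop_of_pos (by positivity)).mpr tendsto_id)
      have := (Real.tendsto_exp_atBot.comp hlim).const_mul (|Real.log b| + 2*a/(b*lam))
      simpa using this
  -- FTC
  have hFTC : ∫ x in Ioi (0:ℝ),
        (lam * Real.exp (-(lam * x)) * Real.log (a * x + b)
          - Real.exp (-(lam * x)) * (a / (a * x + b)))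
      = 0 - -(Real.exp (-(lam * 0)) * Real.log (a * 0 + b)) :=
    integral_Ioi_of_hasDerivAt_of_tendsto' h_deriv (f_int.sub h_int) h_tendsto
  have hF0 : (0:ℝ) - -(Real.exp (-(lam * 0)) * Real.log (a * 0 + b)) = Real.log b := by
    norm_num
  rw [hF0, integral_sub f_int h_int] at hFTC
  have key := key_lemma lam a b hlam ha hb
  linarith [hFTC, key]
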